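/- Let M be a matroid with finite ground set E, rank(M) = r ≥ 1, and let k ≥ 0 be an integer. Let X ⊆ E be an h-uniform set, for some integer h with 1 ≤ h ≤ r, of size at least (h−1)·((k+1)·r)^{r−1} + (k+1)·r. Then for every k-fault-tolerant basis B of M there exists a k-fault-tolerant basis B' of M such that (i) B \ cl(X) = B' \ cl(X), and (ii) B' ∩ cl(X) ⊆ X. -/

import Mathlib

open Set

/-- The rank of a set `X` in a matroid `M`: the maximum cardinality of an
independent subset of `X`. -/
noncomputable def mrank {α : Type*} (M : Matroid α) (X : Set α) : ℕ :=
  sSup {n : ℕ | ∃ I, M.Indep I ∧ I ⊆ X ∧ I.ncard = n}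

/-- `B` is a `k`-fault-tolerant spanning set of `M`: `B ⊆ M.E` and removing any
at most `k` elements from `B` leaves a set of full rank. -/
def FTSpanning {α : Type*} (M : Matroid α) (k : ℕ) (B : Set α) : Prop :=
  B ⊆ M.E ∧ ∀ F ⊆ B, F.ncard ≤ k → mrank M (B \ F) = mrank M M.E

/-- `B` is a `k`-fault-tolerant basis of `M`: a `k`-fault-tolerant spanning set of
minimum cardinality among all `k`-fault-tolerant spanning sets. -/
def FTBasis {α : Type*} (M : Matroid α) (k : ℕ) (B : Set α) : Prop :=
  FTSpanning M k B ∧ ∀ B', FTSpanning M k B' → B.ncard ≤ B'.ncard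

/-- `X` is `h`-uniform in `M`: `rank(X) = h` and every subset of `X` of size `h`
has rank `h`. -/
def HUniform {α : Type*} (M : Matroid α) (h : ℕ) (X : Set α) : Prop :=
  mrank M X = h ∧ ∀ Y ⊆ X, Y.ncard = h → mrank M Y = h

namespace MrankAPI

variable {α : Type*} {M : Matroid α}

lemma indep_ncard_le_mrank (hXfin : X.Finite) {J : Set α} (hJ : M.Indep J) (hJX : J ⊆ X) :
    J.ncard ≤ mrank M X := by
  apply le_csSup
  · refine ⟨X.ncard, ?_⟩
    rintro n ⟨I, hI, hIX, rfl⟩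
    exact ncard_le_ncard hIX hXfin
  · exact ⟨J, hJ, hJX, rfl⟩

lemma mrank_le {c : ℕ} (hc : ∀ I, M.Indep I → I ⊆ X → I.ncard ≤ c) : mrank M X ≤ c :=
  csSup_le ⟨0, ∅, M.empty_indep, empty_subset _, by simp⟩ (by rintro n ⟨I, hI, hIX, rfl⟩; exact hc I hI hIX)

lemma basis_ncard (hXfin : X.Finite) (hXE : X ⊆ M.E) {I : Set α} (hI : M.IsBasis I X) :
    I.ncard = mrank M X := by
  refine le_antisymm (indep_ncard_le_mrank hXfin hI.indep hI.subset) (mrank_le ?_)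
  intro J hJ hJX
  obtain ⟨J', hJ', hJJ'⟩ := hJ.subset_isBasis_of_subset hJX hXE
  have hcard := hJ'.encard_eq_encard hI
  have hJ'fin : J'.Finite := hXfin.subset hJ'.subset
  have : J'.ncard = I.ncard := by
    rw [Set.ncard_def, hcard, ← Set.ncard_def]
  exact le_trans (ncard_le_ncard hJJ' hJ'fin) this.le

lemma exists_basis_mrank (hXfin : X.Finite) (hXE : X ⊆ M.E) :
    ∃ I, M.IsBasis I X ∧ I.ncard = mrank M X := by
  obtain ⟨I, hI⟩ := M.exists_isBasis X hXE
  exact ⟨I, hI, basis_ncard hXfin hXE hI⟩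

lemma mrank_mono (hYfin : Y.Finite) (hXY : X ⊆ Y) : mrank M X ≤ mrank M Y := by
  apply mrank_le
  intro I hI hIX
  exact indep_ncard_le_mrank hYfin hI (hIX.trans hXY)

lemma mrank_le_ncard (hXfin : X.Finite) : mrank M X ≤ X.ncard :=
  mrank_le fun I _ hIX => ncard_le_ncard hIX hXfin

lemma mrank_closure_eq (hE : M.E.Finite) (hXE : X ⊆ M.E) : mrank M (M.closure X) = mrank M X := by
  have hXfin := hE.subset hXE
  obtain ⟨I, hI, hIcard⟩ := exists_basis_mrank hXfin hXE
  rw [← hIcard, basis_ncard (hE.subset (M.closure_subset_ground X)) (M.closure_subset_ground X)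
    hI.isBasis_closure_right]

lemma mrank_congr_closure (hE : M.E.Finite) (hXE : X ⊆ M.E) (hYE : Y ⊆ M.E)
    (hcl : M.closure X = M.closure Y) : mrank M X = mrank M Y := by
  rw [← mrank_closure_eq hE hXE, hcl, mrank_closure_eq hE hYE]

lemma mrank_union_closure_right (hE : M.E.Finite) (hAE : A ⊆ M.E) (hXE : X ⊆ M.E) :
    mrank M (A ∪ M.closure X) = mrank M (A ∪ X) := by
  apply mrank_congr_closure hE (union_subset hAE (M.closure_subset_ground X))
    (union_subset hAE hXE)
  simp

lemma mrank_insert_le (hE : M.E.Finite) {e : α} (hWE : W ⊆ M.E) :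
    mrank M (insert e W) ≤ mrank M W + 1 := by
  have hWfin : W.Finite := hE.subset hWE
  apply mrank_le
  intro I hI hIX
  have h1 : I \ {e} ⊆ W := by
    intro x hx
    rcases hIX hx.1 with h | h
    · exact absurd h hx.2
    · exact h
  have h2 : I.ncard ≤ (I \ {e}).ncard + 1 := by
    have : I ⊆ insert e (I \ {e}) := by
      intro x hx
      by_cases hxe : x = e
      · exact hxe ▸ mem_insert _ _
      · exact mem_insert_of_mem _ ⟨hx, hxe⟩
    exact le_trans (ncard_le_ncard this ((hWfin.subset h1).insert e))
      (ncard_insert_le _ _)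
  exact le_trans h2 (by
    have := indep_ncard_le_mrank hWfin (hI.subset diff_subset) h1
    omega)

lemma mrank_insert_not_mem_closure (hE : M.E.Finite) {e : α} (hWE : W ⊆ M.E)
    (heE : e ∈ M.E) (hecl : e ∉ M.closure W) :
    mrank M (insert e W) = mrank M W + 1 := by
  have hWfin : W.Finite := hE.subset hWE
  refine le_antisymm (mrank_insert_le hE hWE) ?_
  obtain ⟨I, hI, hIcard⟩ := exists_basis_mrank hWfin hWE
  have hclI : M.closure I = M.closure W := hI.closure_eq_closure
  have heI : e ∉ I := fun h => hecl (hclI ▸ M.mem_closure_of_mem h hI.indep.subset_ground)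
  have hind : M.Indep (insert e I) := by
    rw [hI.indep.insert_indep_iff_of_notMem heI]
    exact ⟨heE, fun h => hecl (hclI ▸ h)⟩
  have hsub : insert e I ⊆ insert e W := insert_subset_insert hI.subset
  have h5 := indep_ncard_le_mrank (hWfin.insert e) hind hsub
  have h6 : (insert e I).ncard = I.ncard + 1 :=
    ncard_insert_of_notMem heI (hWfin.subset hI.subset)
  omega

lemma mrank_eq_spanning_closure (hE : M.E.Finite) (hWE : W ⊆ M.E)
    (hrk : mrank M W = mrank M M.E) : M.closure W = M.E := by
  refine subset_antisymm (M.closure_subset_ground W) (fun e he => ?_)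
  by_contra hecl
  have h1 := mrank_insert_not_mem_closure hE hWE he hecl
  have h2 : mrank M (insert e W) ≤ mrank M M.E :=
    mrank_mono hE (insert_subset he hWE)
  omega

lemma mrank_union_le_add_ncard (hE : M.E.Finite) (hAE : A ⊆ M.E) (hTE : T ⊆ M.E) :
    mrank M (A ∪ T) ≤ mrank M A + T.ncard := by
  have hTfin : T.Finite := hE.subset hTE
  have key : ∀ T' : Set α, T'.Finite → T' ⊆ M.E → mrank M (A ∪ T') ≤ mrank M A + T'.ncard := by
    intro T' hfin
    refine Set.Finite.induction_on
      (motive := fun T'' _ => T'' ⊆ M.E → mrank M (A ∪ T'') ≤ mrank M A + T''.ncard)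
      T' hfin (by simp) ?_
    intro a s ha hs ih haE
    · have hsE : s ⊆ M.E := (subset_insert a s).trans haE
      have h1 : A ∪ insert a s = insert a (A ∪ s) := union_insert
      rw [h1]
      have h2 := mrank_insert_le (e := a) hE (union_subset hAE hsE)
      have h3 := ih hsE
      have h4 : (insert a s).ncard = s.ncard + 1 := ncard_insert_of_notMem ha hs
      omega
  exact key T hTfin hTE

lemma indep_of_mrank_eq_ncard (hE : M.E.Finite) (hXE : X ⊆ M.E)
    (hrk : mrank M X = X.ncard) : M.Indep X := by
  have hXfin : X.Finite := hE.subset hXE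
  obtain ⟨I, hI, hIcard⟩ := exists_basis_mrank hXfin hXE
  have : I = X := eq_of_subset_of_ncard_le hI.subset (by omega) hXfin
  exact this ▸ hI.indep


lemma cert_bound (hE : M.E.Finite) (k : ℕ) : ∀ (n : ℕ) (A : Set α), A ⊆ M.E → mrank M A = n →
    (∀ e ∈ A, ∃ F, F ⊆ A \ {e} ∧ F.ncard ≤ k ∧ e ∉ M.closure (A \ insert e F)) →
    A.ncard ≤ (k + 1) * n := by
  intro n
  induction n using Nat.strong_induction_on with
  | _ n ih =>
    intro A hAE hrk hcert
    rcases A.eq_empty_or_nonempty with rfl | ⟨e, he⟩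
    · simp
    have hAfin : A.Finite := hE.subset hAE
    obtain ⟨F, hF, hFk, hecl⟩ := hcert e he
    set W := A \ insert e F with hW
    have hWA : W ⊆ A := diff_subset
    have hWE : W ⊆ M.E := hWA.trans hAE
    have heE : e ∈ M.E := hAE he
    have heW : e ∉ W := fun h => h.2 (mem_insert _ _)
    have h1 : mrank M (insert e W) = mrank M W + 1 :=
      mrank_insert_not_mem_closure hE hWE heE hecl
    have h2 : insert e W ⊆ A := insert_subset he hWA
    have h3 : mrank M (insert e W) ≤ n := hrk ▸ mrank_mono hAfin h2
    have hWlt : mrank M W < n := by omega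
    have hcert' : ∀ e' ∈ W, ∃ F', F' ⊆ W \ {e'} ∧ F'.ncard ≤ k ∧
        e' ∉ M.closure (W \ insert e' F') := by
      intro e' he'
      obtain ⟨F', hF', hF'k, he'cl⟩ := hcert e' (hWA he')
      refine ⟨F' ∩ (W \ {e'}), inter_subset_right, ?_, ?_⟩
      · exact le_trans (ncard_le_ncard inter_subset_left
          (hAfin.subset (hF'.trans diff_subset))) hF'k
      · intro hmem
        apply he'cl
        refine M.closure_subset_closure ?_ hmem
        intro x hx
        refine ⟨hWA hx.1, ?_⟩
        intro hxmem
        rcases hxmem with h | h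
        · exact hx.2 (h ▸ mem_insert _ _)
        · exact hx.2 (mem_insert_of_mem _ ⟨h, hx.1, fun hxe => hx.2 (hxe ▸ mem_insert _ _)⟩)
    have ihW := ih (mrank M W) hWlt W hWE rfl hcert'
    have h4 : A ⊆ W ∪ insert e F := by
      intro x hx
      by_cases hxm : x ∈ insert e F
      · exact Or.inr hxm
      · exact Or.inl ⟨hx, hxm⟩
    have h5 : A.ncard ≤ W.ncard + (F.ncard + 1) := by
      refine le_trans (ncard_le_ncard h4 ((hAfin.subset hWA).union
        ((hAfin.subset (hF.trans diff_subset)).insert e))) ?_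
      exact le_trans (ncard_union_le _ _) (by
        have := ncard_insert_le e F
        omega)
    have h6 : (k + 1) * (mrank M W + 1) ≤ (k + 1) * n := Nat.mul_le_mul_left _ (by omega)
    calc A.ncard ≤ W.ncard + (F.ncard + 1) := h5
      _ ≤ (k + 1) * mrank M W + (k + 1) := by omega
      _ = (k + 1) * (mrank M W + 1) := by ring
      _ ≤ (k + 1) * n := h6

lemma ftbasis_ncard_le (hE : M.E.Finite) {k : ℕ} {B : Set α} (hB : FTBasis M k B) :
    B.ncard ≤ (k + 1) * mrank M M.E := by
  obtain ⟨⟨hBE, hBF⟩, hBmin⟩ := hB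
  have hBfin : B.Finite := hE.subset hBE
  have hcert : ∀ e ∈ B, ∃ F, F ⊆ B \ {e} ∧ F.ncard ≤ k ∧ e ∉ M.closure (B \ insert e F) := by
    intro e he
    have hnot : ¬ FTSpanning M k (B \ {e}) := by
      intro hsp
      have := hBmin _ hsp
      have hlt : (B \ {e}).ncard < B.ncard := by
        rw [ncard_diff_singleton_of_mem he]
        have : 0 < B.ncard := (ncard_pos hBfin).mpr ⟨e, he⟩
        omega
      omega
    rw [FTSpanning, not_and_or] at hnot
    rcases hnot with h | h
    · exact absurd (diff_subset.trans hBE) h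
    push_neg at h
    obtain ⟨F, hF, hFk, hne⟩ := h
    have heF : e ∉ F := fun hmem => (hF hmem).2 rfl
    have hWeq : (B \ {e}) \ F = B \ insert e F := by
      ext x
      simp only [mem_diff, mem_singleton_iff, mem_insert_iff]
      tauto
    rw [hWeq] at hne
    refine ⟨F, hF, hFk, ?_⟩
    intro hmem
    apply hne
    have hrkBF : mrank M (B \ F) = mrank M M.E := hBF F (hF.trans diff_subset) hFk
    have hsub : B \ F ⊆ M.closure (B \ insert e F) := by
      intro x hx
      by_cases hxe : x = e
      · exact hxe ▸ hmem
      · exact M.subset_closure _ ((diff_subset.trans hBE).trans subset_rfl)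
          ⟨hx.1, fun hm => (by rcases hm with hm | hm; exact hxe hm; exact hx.2 hm)⟩
    have hle : mrank M (B \ F) ≤ mrank M (B \ insert e F) := by
      refine le_trans (mrank_mono (hE.subset (M.closure_subset_ground _)) hsub) ?_
      rw [mrank_closure_eq hE (diff_subset.trans hBE)]
    have hle2 : mrank M (B \ insert e F) ≤ mrank M M.E :=
      mrank_mono hE (diff_subset.trans hBE)
    omega
  calc B.ncard ≤ (k + 1) * mrank M B := cert_bound hE k (mrank M B) B hBE rfl hcert
    _ ≤ (k + 1) * mrank M M.E := Nat.mul_le_mul_left _ (mrank_mono hE hBE)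


lemma sum_choose_le (N d : ℕ) (hN : 2 ≤ N ∨ d = 0) :
    ∑ j ∈ Finset.Icc 1 d, N.choose j ≤ N ^ d := by
  rcases hN with hN | rfl
  · induction d with
    | zero => simp
    | succ d ih =>
      rcases Nat.eq_zero_or_pos d with rfl | hd
      · simpa using hN
      have h1 : Finset.Icc 1 (d + 1) = insert (d + 1) (Finset.Icc 1 d) := by
        ext j
        simp only [Finset.mem_Icc, Finset.mem_insert]
        omega
      rw [h1, Finset.sum_insert (by simp)]
      have h2 : 2 * N.choose (d + 1) ≤ N ^ (d + 1) := by
        have h3 : Nat.factorial (d + 1) * N.choose (d + 1) = N.descFactorial (d + 1) :=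
          (Nat.descFactorial_eq_factorial_mul_choose _ _).symm
        have h4 : N.descFactorial (d + 1) ≤ N ^ (d + 1) := Nat.descFactorial_le_pow _ _
        have h5 : 2 ≤ Nat.factorial (d + 1) := by
          have := Nat.factorial_le (show 2 ≤ d + 1 by omega)
          simpa [Nat.factorial] using this
        have h6 : 2 * N.choose (d + 1) ≤ Nat.factorial (d + 1) * N.choose (d + 1) :=
          Nat.mul_le_mul_right _ h5
        omega
      have h7 : 2 * N ^ d ≤ N ^ (d + 1) := by
        rw [pow_succ, mul_comm (N ^ d) N]
        exact Nat.mul_le_mul_right _ hN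
      omega
  · simp

lemma ncard_biUnion_le {β : Type*} (s : Finset β) (f : β → Set α) (c : ℕ)
    (hc : ∀ b ∈ s, (f b).ncard ≤ c) :
    (⋃ b ∈ (↑s : Set β), f b).ncard ≤ s.card * c := by
  classical
  induction s using Finset.induction_on with
  | empty => simp
  | @insert a t ha ih =>
    have h1 : (⋃ b ∈ (↑(insert a t) : Set β), f b) = f a ∪ ⋃ b ∈ (↑t : Set β), f b := by
      simp [Set.biUnion_insert]
    rw [h1]
    refine le_trans (ncard_union_le _ _) ?_
    have h2 := ih (fun b hb => hc b (Finset.mem_insert_of_mem hb))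
    have h3 := hc a (Finset.mem_insert_self a t)
    rw [Finset.card_insert_of_notMem ha]
    nlinarith

lemma card_small_subsets {C : Finset α} {d N : ℕ} (hCN : C.card ≤ N) (hN : 2 ≤ N ∨ d = 0) :
    (C.powerset.filter fun t => t.Nonempty ∧ t.card ≤ d).card ≤ N ^ d := by
  classical
  have h1 : (C.powerset.filter fun t => t.Nonempty ∧ t.card ≤ d) ⊆
      (Finset.Icc 1 d).biUnion (fun j => C.powersetCard j) := by
    intro t ht
    simp only [Finset.mem_filter, Finset.mem_powerset] at ht
    obtain ⟨htC, htne, htd⟩ := ht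
    refine Finset.mem_biUnion.mpr ⟨t.card, ?_, ?_⟩
    · exact Finset.mem_Icc.mpr ⟨Finset.card_pos.mpr htne, htd⟩
    · exact Finset.mem_powersetCard.mpr ⟨htC, rfl⟩
  refine le_trans (Finset.card_le_card h1) ?_
  refine le_trans Finset.card_biUnion_le ?_
  refine le_trans (Finset.sum_le_sum (fun j _ => ?_)) (sum_choose_le N d hN)
  rw [Finset.card_powersetCard]
  exact Nat.choose_le_choose j hCN

end MrankAPI

/-- Lemma: Let `M` have finite ground set and rank `r ≥ 1`, `k ≥ 0`, and
let `X ⊆ M.E` be an `h`-uniform set (`1 ≤ h ≤ r`) of size at least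
`(h−1)·((k+1)·r)^(r−1) + (k+1)·r`. Then for every `k`-fault-tolerant basis `B` there is
a `k`-fault-tolerant basis `B'` with `B \ cl(X) = B' \ cl(X)` and `B' ∩ cl(X) ⊆ X`. -/


theorem statement6 {α : Type*} (M : Matroid α) (hE : M.E.Finite)
    (r : ℕ) (hr : r = mrank M M.E) (hr1 : 1 ≤ r) (k : ℕ)
    (h : ℕ) (hh1 : 1 ≤ h) (hhr : h ≤ r)
    (X : Set α) (hXE : X ⊆ M.E) (hX : HUniform M h X)
    (hXcard : (h - 1) * ((k + 1) * r) ^ (r - 1) + (k + 1) * r ≤ X.ncard)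
    (B : Set α) (hB : FTBasis M k B) :
    ∃ B' : Set α, FTBasis M k B' ∧
      B \ M.closure X = B' \ M.closure X ∧ B' ∩ M.closure X ⊆ X := by
  classical
  open MrankAPI in
  obtain ⟨hXrk, hXunif⟩ := hX
  have hXfin : X.Finite := hE.subset hXE
  have hBE : B ⊆ M.E := hB.1.1
  have hBFT : ∀ F ⊆ B, F.ncard ≤ k → mrank M (B \ F) = mrank M M.E := hB.1.2
  have hBmin : ∀ B'', FTSpanning M k B'' → B.ncard ≤ B''.ncard := hB.2
  have hBfin : B.Finite := hE.subset hBE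
  set N := (k + 1) * r with hN
  set d := r - 1 with hd
  have hBcard : B.ncard ≤ N := by
    have := MrankAPI.ftbasis_ncard_le hE hB
    rw [← hr] at this
    exact this
  have hrN : r ≤ N := Nat.le_mul_of_pos_left r (by omega)
  have hNX : N ≤ X.ncard := le_trans (Nat.le_add_left _ _) hXcard
  set B₀ := B \ M.closure X with hB₀
  set B₁ := B ∩ M.closure X with hB₁
  have hB₀E : B₀ ⊆ M.E := diff_subset.trans hBE
  have hB₀fin : B₀.Finite := hBfin.subset diff_subset
  have hB₁fin : B₁.Finite := hBfin.subset inter_subset_left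
  set m := B₁.ncard with hm
  have hsplit : m + B₀.ncard = B.ncard := ncard_inter_add_ncard_diff_eq_ncard B (M.closure X) hBfin
  have hmN : m ≤ N := le_trans (le_trans (Nat.le_add_right _ _) hsplit.le) hBcard
  have hXcl : X ⊆ M.closure X := M.subset_closure X hXE
  -- X has no loops
  have hXloop : ∀ x ∈ X, x ∉ M.closure ∅ := by
    intro x hx hxcl
    have hhX : h ≤ X.ncard := le_trans (le_trans hhr hrN) hNX
    have hle : h - 1 ≤ (X \ {x}).ncard := by
      rw [ncard_diff_singleton_of_mem hx]; omega
    obtain ⟨Y', hY'sub, hY'card⟩ := Set.exists_subset_card_eq hle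
    have hxY' : x ∉ Y' := fun hmem => (hY'sub hmem).2 rfl
    have hY'X : Y' ⊆ X := hY'sub.trans diff_subset
    have hYX : insert x Y' ⊆ X := insert_subset hx hY'X
    have hYcard : (insert x Y').ncard = h := by
      rw [ncard_insert_of_notMem hxY' (hXfin.subset hY'X)]
      omega
    have hYrk : mrank M (insert x Y') = h := hXunif _ hYX hYcard
    have hYindep : M.Indep (insert x Y') :=
      MrankAPI.indep_of_mrank_eq_ncard hE (hYX.trans hXE) (by rw [hYrk, hYcard])
    have hxind : M.Indep {x} := hYindep.subset (by simp)
    have h1 : (1:ℕ) ≤ mrank M (M.closure ∅) := by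
      have := MrankAPI.indep_ncard_le_mrank (hE.subset (M.closure_subset_ground ∅)) hxind
        (singleton_subset_iff.mpr hxcl)
      simpa using this
    rw [MrankAPI.mrank_closure_eq hE (empty_subset _)] at h1
    have h0 : mrank M (∅ : Set α) = 0 :=
      le_antisymm (by simpa using MrankAPI.mrank_le_ncard (M := M) finite_empty) (Nat.zero_le _)
    omega
  -- uniform flat bound
  have hflat : ∀ W ⊆ M.E, ¬ X ⊆ M.closure W → (X ∩ M.closure W).ncard ≤ h - 1 := by
    intro W hWE hnsub
    by_contra hcon
    push_neg at hcon
    have hge : h ≤ (X ∩ M.closure W).ncard := by omega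
    obtain ⟨Y, hYsub, hYcard⟩ := Set.exists_subset_card_eq hge
    have hYX : Y ⊆ X := hYsub.trans inter_subset_left
    have hYrk : mrank M Y = h := hXunif Y hYX hYcard
    have hYE : Y ⊆ M.E := hYX.trans hXE
    have hYindep : M.Indep Y :=
      MrankAPI.indep_of_mrank_eq_ncard hE hYE (by rw [hYrk, hYcard])
    have hXclY : X ⊆ M.closure Y := by
      intro x hxX
      by_contra hxcl
      have hxY : x ∉ Y := fun hmem => hxcl (M.mem_closure_of_mem hmem hYE)
      have hind : M.Indep (insert x Y) := by
        rw [hYindep.insert_indep_iff_of_notMem hxY]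
        exact ⟨hXE hxX, hxcl⟩
      have hcard : (insert x Y).ncard = h + 1 := by
        rw [ncard_insert_of_notMem hxY (hXfin.subset hYX)]; omega
      have := MrankAPI.indep_ncard_le_mrank hXfin hind (insert_subset hxX hYX)
      rw [hcard, hXrk] at this
      omega
    exact hnsub (hXclY.trans (M.closure_subset_closure_of_subset_closure
      (hYsub.trans inter_subset_right)))
  -- fact1 : spanning modulo X
  have hfact1 : ∀ F₀ ⊆ B₀, F₀.ncard ≤ k → mrank M ((B₀ \ F₀) ∪ X) = r := by
    intro F₀ hF₀ hF₀k
    have hAE : (B₀ \ F₀) ∪ X ⊆ M.E := union_subset (diff_subset.trans hB₀E) hXE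
    refine le_antisymm (by rw [hr]; exact MrankAPI.mrank_mono hE hAE) ?_
    have hsub : B \ F₀ ⊆ (B₀ \ F₀) ∪ M.closure X := by
      intro x hx
      by_cases hxcl : x ∈ M.closure X
      · exact Or.inr hxcl
      · exact Or.inl ⟨⟨hx.1, hxcl⟩, hx.2⟩
    have h1 : mrank M (B \ F₀) = r := (hBFT F₀ (hF₀.trans diff_subset) hF₀k).trans hr.symm
    calc r = mrank M (B \ F₀) := h1.symm
      _ ≤ mrank M ((B₀ \ F₀) ∪ M.closure X) :=
          MrankAPI.mrank_mono (hE.subset (union_subset (diff_subset.trans hB₀E)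
            (M.closure_subset_ground X))) hsub
      _ = mrank M ((B₀ \ F₀) ∪ X) :=
          MrankAPI.mrank_union_closure_right hE (diff_subset.trans hB₀E) hXE
  -- fact2
  have hfact2 : ∀ F₀ ⊆ B₀, F₀.ncard ≤ k →
      r ≤ mrank M (B₀ \ F₀) ∨ r + k ≤ mrank M (B₀ \ F₀) + m + F₀.ncard := by
    intro F₀ hF₀ hF₀k
    have hF₀fin : F₀.Finite := hB₀fin.subset hF₀
    have hF₀cl : ∀ x ∈ F₀, x ∉ M.closure X := fun x hx => (hF₀ hx).2
    rcases le_or_gt m (k - F₀.ncard) with hcase | hcase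
    · left
      have hFG : F₀ ∪ B₁ ⊆ B := union_subset (hF₀.trans diff_subset) inter_subset_left
      have hdisj01 : Disjoint F₀ B₁ := by
        rw [Set.disjoint_left]
        intro x hx hx1
        exact (hF₀ hx).2 hx1.2
      have hcard : (F₀ ∪ B₁).ncard ≤ k := by
        rw [ncard_union_eq hdisj01 hF₀fin hB₁fin]
        omega
      have h1 : mrank M (B \ (F₀ ∪ B₁)) = r := (hBFT _ hFG hcard).trans hr.symm
      have heq : B \ (F₀ ∪ B₁) = B₀ \ F₀ := by
        ext x
        simp only [hB₀, hB₁, mem_diff, mem_union, mem_inter_iff, not_or]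
        constructor
        · rintro ⟨hxB, hxF₀, hxB₁⟩
          have hxcl : x ∉ M.closure X := fun hc => hxB₁ ⟨hxB, hc⟩
          exact ⟨⟨hxB, hxcl⟩, hxF₀⟩
        · rintro ⟨⟨hxB, hxcl⟩, hxF₀⟩
          exact ⟨hxB, hxF₀, fun hc => hxcl hc.2⟩
      rw [heq] at h1
      omega
    · right
      obtain ⟨G, hGsub, hGcard⟩ := Set.exists_subset_card_eq
        (show k - F₀.ncard ≤ m from hcase.le)
      have hGfin : G.Finite := hB₁fin.subset hGsub
      have hGcl : ∀ x ∈ G, x ∈ M.closure X := fun x hx => (hGsub hx).2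
      have hFG : F₀ ∪ G ⊆ B :=
        union_subset (hF₀.trans diff_subset) (hGsub.trans inter_subset_left)
      have hdisj01 : Disjoint F₀ G := by
        rw [Set.disjoint_left]
        intro x hx hx1
        exact hF₀cl x hx (hGcl x hx1)
      have hcard : (F₀ ∪ G).ncard ≤ k := by
        rw [ncard_union_eq hdisj01 hF₀fin hGfin, hGcard]
        omega
      have h1 : mrank M (B \ (F₀ ∪ G)) = r := (hBFT _ hFG hcard).trans hr.symm
      have heq : B \ (F₀ ∪ G) = (B₀ \ F₀) ∪ (B₁ \ G) := by
        ext x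
        simp only [hB₀, hB₁, mem_diff, mem_union, mem_inter_iff, not_or]
        constructor
        · rintro ⟨hxB, hxF₀, hxG⟩
          by_cases hxcl : x ∈ M.closure X
          · exact Or.inr ⟨⟨hxB, hxcl⟩, hxG⟩
          · exact Or.inl ⟨⟨hxB, hxcl⟩, hxF₀⟩
        · rintro (⟨⟨hxB, hxcl⟩, hxF₀⟩ | ⟨⟨hxB, hxcl⟩, hxG⟩)
          · exact ⟨hxB, hxF₀, fun hc => hxcl (hGcl x hc)⟩
          · exact ⟨hxB, fun hc => hF₀cl x hc hxcl, hxG⟩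
      rw [heq] at h1
      have h2 : mrank M ((B₀ \ F₀) ∪ (B₁ \ G)) ≤ mrank M (B₀ \ F₀) + (B₁ \ G).ncard :=
        MrankAPI.mrank_union_le_add_ncard hE (diff_subset.trans hB₀E)
          (diff_subset.trans (inter_subset_left.trans hBE))
      have h3 : (B₁ \ G).ncard = m - (k - F₀.ncard) := by
        rw [ncard_diff hGsub hGfin, hGcard]
      omega
  -- greedy pick
  have hpick : ∀ S' : Set α, S' ⊆ X → S'.Finite → S'.ncard < N → (B₀ ∪ S').ncard ≤ N →
      ∃ x ∈ X, x ∉ S' ∧ ∀ W, W ⊆ B₀ ∪ S' → ¬ X ⊆ M.closure W → x ∉ M.closure W := by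
    intro S' hS'X hS'fin hS'N hCN'
    have hCfin : (B₀ ∪ S').Finite := hB₀fin.union hS'fin
    set C : Finset α := hCfin.toFinset with hC
    have hCcard : C.card ≤ N := by
      rw [hC, ← Set.ncard_eq_toFinset_card _ hCfin]
      exact hCN'
    have hN2 : 2 ≤ N ∨ d = 0 := by
      rcases Nat.lt_or_ge r 2 with h2 | h2
      · right; omega
      · left; omega
    set J : Finset (Finset α) := C.powerset.filter
      (fun t => t.Nonempty ∧ t.card ≤ d ∧ ¬ X ⊆ M.closure ↑t) with hJ
    have hJcard : J.card ≤ N ^ d := by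
      refine le_trans (Finset.card_le_card ?_) (MrankAPI.card_small_subsets hCcard hN2)
      intro t ht
      simp only [hJ, Finset.mem_filter] at ht ⊢
      exact ⟨ht.1, ht.2.1, ht.2.2.1⟩
    set Bad : Set α := ⋃ t ∈ (↑J : Set (Finset α)), (X ∩ M.closure ↑t) with hBadDef
    have hBadsub : Bad ⊆ X := by
      rw [hBadDef]
      exact Set.iUnion₂_subset fun t _ => inter_subset_left
    have hBadfin : Bad.Finite := hXfin.subset hBadsub
    have hBadcard : Bad.ncard ≤ N ^ d * (h - 1) := by
      refine le_trans (MrankAPI.ncard_biUnion_le J _ (h - 1) ?_) ?_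
      · intro t ht
        simp only [hJ, Finset.mem_filter, Finset.mem_powerset] at ht
        refine hflat ↑t ?_ ht.2.2.2
        intro y hy
        have hyC : y ∈ C := ht.1 hy
        rw [hC, Set.Finite.mem_toFinset] at hyC
        exact (union_subset hB₀E (hS'X.trans hXE)) hyC
      · exact Nat.mul_le_mul_right _ hJcard
    have hexists : ∃ x ∈ X, x ∉ Bad ∪ S' := by
      by_contra hc
      push_neg at hc
      have hcov : X ⊆ Bad ∪ S' := fun x hx => hc x hx
      have h2 : X.ncard ≤ (Bad ∪ S').ncard := ncard_le_ncard hcov (hBadfin.union hS'fin)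
      have h1 : (Bad ∪ S').ncard ≤ Bad.ncard + S'.ncard := ncard_union_le _ _
      have h4 : (h - 1) * N ^ d = N ^ d * (h - 1) := mul_comm _ _
      omega
    obtain ⟨x, hxX, hxn⟩ := hexists
    refine ⟨x, hxX, fun hxS' => hxn (Or.inr hxS'), ?_⟩
    intro W hWsub hnX hxcl
    have hWE : W ⊆ M.E := hWsub.trans (union_subset hB₀E (hS'X.trans hXE))
    have hWfin : W.Finite := hE.subset hWE
    obtain ⟨I, hI, hIcard⟩ := MrankAPI.exists_basis_mrank hWfin hWE
    have hIcl : M.closure I = M.closure W := hI.closure_eq_closure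
    have hIfin : I.Finite := hWfin.subset hI.subset
    rcases I.eq_empty_or_nonempty with hIe | hIne
    · rw [← hIcl, hIe] at hxcl
      exact hXloop x hxX hxcl
    · have hWrk : mrank M W ≤ d := by
        have hle : mrank M W ≤ r := hr ▸ MrankAPI.mrank_mono hE hWE
        have hne : mrank M W ≠ r := by
          intro heq
          have hclW := MrankAPI.mrank_eq_spanning_closure hE hWE (by rw [heq, hr])
          rw [hclW] at hnX
          exact hnX hXE
        omega
      have htJ : hIfin.toFinset ∈ J := by
        simp only [hJ, Finset.mem_filter, Finset.mem_powerset]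
        refine ⟨?_, ?_, ?_, ?_⟩
        · intro y hy
          rw [Set.Finite.mem_toFinset] at hy
          rw [hC, Set.Finite.mem_toFinset]
          exact hWsub (hI.subset hy)
        · rwa [Set.Finite.toFinset_nonempty]
        · rw [← Set.ncard_eq_toFinset_card _ hIfin, hIcard]
          exact hWrk
        · rw [Set.Finite.coe_toFinset, hIcl]
          exact hnX
      have hxBad : x ∈ Bad := by
        rw [hBadDef]
        refine Set.mem_biUnion (Finset.mem_coe.mpr htJ) ?_
        rw [Set.Finite.coe_toFinset, hIcl]
        exact ⟨hxX, hxcl⟩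
      exact hxn (Or.inl hxBad)
  -- greedy sequence
  have hXne : X.Nonempty := by
    rw [← ncard_pos hXfin]
    omega
  have hgreedy : ∀ n ≤ m, ∃ s : ℕ → α,
      (∀ i < n, s i ∈ X) ∧ (∀ i < n, s i ∉ s '' Iio i) ∧
      (∀ i < n, ∀ W, W ⊆ B₀ ∪ s '' Iio i → ¬ X ⊆ M.closure W → s i ∉ M.closure W) := by
    intro n
    induction n with
    | zero =>
      intro _
      obtain ⟨x₀, _⟩ := hXne
      exact ⟨fun _ => x₀, fun i hi => absurd hi (by omega), fun i hi => absurd hi (by omega),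
        fun i hi => absurd hi (by omega)⟩
    | succ n ih =>
      intro hn1
      obtain ⟨s, h1, h2, h3⟩ := ih (by omega)
      have hS'X : s '' Iio n ⊆ X := by
        rintro _ ⟨i, hi, rfl⟩
        exact h1 i hi
      have hIiofin : (Iio n).Finite := by
        rw [← Finset.coe_range]
        exact (Finset.range n).finite_toSet
      have hS'fin : (s '' Iio n).Finite := hIiofin.image s
      have hS'card : (s '' Iio n).ncard ≤ n := by
        refine le_trans (ncard_image_le hIiofin) ?_
        rw [← Finset.coe_range, ncard_coe_finset, Finset.card_range]
      have hS'N : (s '' Iio n).ncard < N := by omega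
      have hCN' : (B₀ ∪ s '' Iio n).ncard ≤ N := by
        refine le_trans (ncard_union_le _ _) ?_
        omega
      obtain ⟨x, hxX, hxS', hxgen⟩ := hpick (s '' Iio n) hS'X hS'fin hS'N hCN'
      have himg : ∀ i ≤ n, Function.update s n x '' Iio i = s '' Iio i := by
        intro i hin
        apply image_congr
        intro j hj
        simp only [mem_Iio] at hj
        have hjn : j ≠ n := by omega
        exact Function.update_of_ne hjn x s
      refine ⟨Function.update s n x, ?_, ?_, ?_⟩
      · intro i hi
        rcases Nat.lt_or_ge i n with hin | hin
        · rw [Function.update_of_ne (by omega)]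
          exact h1 i hin
        · have : i = n := by omega
          subst this
          rw [Function.update_self]
          exact hxX
      · intro i hi
        rcases Nat.lt_or_ge i n with hin | hin
        · rw [Function.update_of_ne (by omega), himg i (by omega)]
          exact h2 i hin
        · have : i = n := by omega
          subst this
          rw [Function.update_self, himg i le_rfl]
          exact hxS'
      · intro i hi W hWsub hnX
        rcases Nat.lt_or_ge i n with hin | hin
        · rw [himg i (by omega)] at hWsub
          rw [Function.update_of_ne (by omega)]
          exact h3 i hin W hWsub hnX
        · have : i = n := by omega
          subst this
          rw [himg i le_rfl] at hWsub
          rw [Function.update_self]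
          exact hxgen W hWsub hnX
  obtain ⟨s, hsX, hsnew, hsgen⟩ := hgreedy m le_rfl
  set S := s '' Iio m with hS
  have hSX : S ⊆ X := by
    rintro x ⟨i, hi, rfl⟩
    exact hsX i hi
  have hSfin : S.Finite := hXfin.subset hSX
  have hScard : S.ncard = m := by
    have hinj : Set.InjOn s (Iio m) := by
      intro a ha b hb hab
      by_contra hne
      rcases Nat.lt_or_ge a b with hlt | hge
      · exact hsnew b hb ⟨a, hlt, hab⟩
      · have hlt : b < a := by omega
        exact hsnew a ha ⟨b, hlt, hab.symm⟩
    rw [hS, ncard_image_of_injOn hinj, ← Finset.coe_range, ncard_coe_finset, Finset.card_range]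
  have hdisj : Disjoint B₀ S := by
    rw [Set.disjoint_left]
    rintro x hx hxS
    exact hx.2 (hXcl (hSX hxS))
  set B' := B₀ ∪ S with hB'
  have hB'E : B' ⊆ M.E := union_subset hB₀E (hSX.trans hXE)
  have hB'fin : B'.Finite := hB₀fin.union hSfin
  have hB'card : B'.ncard = B.ncard := by
    rw [hB', ncard_union_eq hdisj hB₀fin hSfin, hScard]
    omega
  have hFT : FTSpanning M k B' := by
    refine ⟨hB'E, fun F hF hFk => ?_⟩
    have hFfin : F.Finite := hB'fin.subset hF
    have hF₀B₀ : F ∩ B₀ ⊆ B₀ := inter_subset_right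
    have hF₀k : (F ∩ B₀).ncard ≤ k := le_trans (ncard_le_ncard inter_subset_left hFfin) hFk
    have hcards : (F ∩ B₀).ncard + (F ∩ S).ncard ≤ k := by
      have hdisjF : Disjoint (F ∩ B₀) (F ∩ S) := hdisj.mono inter_subset_right inter_subset_right
      have hunion : (F ∩ B₀) ∪ (F ∩ S) = F := by
        rw [← Set.inter_union_distrib_left]
        exact inter_eq_self_of_subset_left hF
      calc (F ∩ B₀).ncard + (F ∩ S).ncard
          = ((F ∩ B₀) ∪ (F ∩ S)).ncard :=
            (ncard_union_eq hdisjF (hFfin.subset inter_subset_left)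
              (hFfin.subset inter_subset_left)).symm
        _ = F.ncard := by rw [hunion]
        _ ≤ k := hFk
    have hAeq : B₀ \ F = B₀ \ (F ∩ B₀) := by
      ext x; simp only [mem_diff, mem_inter_iff]; tauto
    have hTeq : S \ F = S \ (F ∩ S) := by
      ext x; simp only [mem_diff, mem_inter_iff]; tauto
    have hsplitBF : B' \ F = (B₀ \ (F ∩ B₀)) ∪ (S \ (F ∩ S)) := by
      rw [hB', union_diff_distrib, hAeq, hTeq]
    have hAE2 : B₀ \ (F ∩ B₀) ⊆ M.E := diff_subset.trans hB₀E
    have hTX : S \ (F ∩ S) ⊆ X := diff_subset.trans hSX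
    have hTS : S \ (F ∩ S) ⊆ S := diff_subset
    have hup : mrank M (B' \ F) ≤ r := hr ▸ MrankAPI.mrank_mono hE (diff_subset.trans hB'E)
    have hTcard : (S \ (F ∩ S)).ncard = m - (F ∩ S).ncard := by
      rw [ncard_diff inter_subset_right (hFfin.subset inter_subset_left), hScard]
    have hlow : r ≤ mrank M (B' \ F) := by
      rw [hsplitBF]
      rcases hfact2 (F ∩ B₀) hF₀B₀ hF₀k with hcase | hcase
      · exact le_trans hcase (MrankAPI.mrank_mono
          (hE.subset (union_subset hAE2 (hTX.trans hXE))) subset_union_left)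
      · -- chain induction
        have hchain : ∀ i, i ≤ m →
            min r (mrank M (B₀ \ (F ∩ B₀)) + ((S \ (F ∩ S)) ∩ s '' Iio i).ncard) ≤
              mrank M ((B₀ \ (F ∩ B₀)) ∪ ((S \ (F ∩ S)) ∩ s '' Iio i)) := by
          intro i
          induction i with
          | zero =>
            intro _
            have hIio0 : Iio (0:ℕ) = ∅ := by ext j; simp
            rw [hIio0]
            simp only [image_empty, inter_empty, ncard_empty, union_empty, add_zero]
            exact min_le_right _ _
          | succ i ih =>
            intro hi1
            have hi : i < m := hi1
            have hIio : Iio (i+1) = insert i (Iio i) := by ext j; simp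
            have himg : s '' Iio (i+1) = insert (s i) (s '' Iio i) := by
              rw [hIio, image_insert_eq]
            have hTifin : ((S \ (F ∩ S)) ∩ s '' Iio i).Finite :=
              hSfin.subset (inter_subset_left.trans diff_subset)
            have hTimono : (B₀ \ (F ∩ B₀)) ∪ ((S \ (F ∩ S)) ∩ s '' Iio i) ⊆
                (B₀ \ (F ∩ B₀)) ∪ ((S \ (F ∩ S)) ∩ s '' Iio (i+1)) := by
              refine union_subset_union_right _ (inter_subset_inter_right _ ?_)
              rw [himg]
              exact subset_insert _ _
            have hWE2 : (B₀ \ (F ∩ B₀)) ∪ ((S \ (F ∩ S)) ∩ s '' Iio i) ⊆ M.E :=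
              union_subset hAE2 (inter_subset_left.trans (hTX.trans hXE))
            have hWE3 : (B₀ \ (F ∩ B₀)) ∪ ((S \ (F ∩ S)) ∩ s '' Iio (i+1)) ⊆ M.E :=
              union_subset hAE2 (inter_subset_left.trans (hTX.trans hXE))
            by_cases hsT : s i ∈ S \ (F ∩ S)
            · have hTset : (S \ (F ∩ S)) ∩ s '' Iio (i+1) =
                  insert (s i) ((S \ (F ∩ S)) ∩ s '' Iio i) := by
                rw [himg]
                ext y
                simp only [mem_inter_iff, mem_insert_iff]
                constructor
                · rintro ⟨hy, hc | hc⟩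
                  · exact Or.inl hc
                  · exact Or.inr ⟨hy, hc⟩
                · rintro (rfl | ⟨hy, hc⟩)
                  · exact ⟨hsT, Or.inl rfl⟩
                  · exact ⟨hy, Or.inr hc⟩
              have hnotm : s i ∉ (S \ (F ∩ S)) ∩ s '' Iio i := fun hmem => hsnew i hi hmem.2
              have hccc : (insert (s i) ((S \ (F ∩ S)) ∩ s '' Iio i)).ncard =
                  ((S \ (F ∩ S)) ∩ s '' Iio i).ncard + 1 :=
                ncard_insert_of_notMem hnotm hTifin
              rcases le_or_gt r (mrank M ((B₀ \ (F ∩ B₀)) ∪ ((S \ (F ∩ S)) ∩ s '' Iio i)))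
                with hge | hlt
              · refine le_trans (min_le_left _ _) (le_trans hge ?_)
                exact MrankAPI.mrank_mono (hE.subset hWE3) hTimono
              · have hWsub : (B₀ \ (F ∩ B₀)) ∪ ((S \ (F ∩ S)) ∩ s '' Iio i) ⊆
                    B₀ ∪ s '' Iio i :=
                  union_subset (diff_subset.trans subset_union_left)
                    (inter_subset_right.trans subset_union_right)
                have hnXW : ¬ X ⊆ M.closure ((B₀ \ (F ∩ B₀)) ∪ ((S \ (F ∩ S)) ∩ s '' Iio i)) := by
                  intro hXsub
                  have e1 : mrank M ((B₀ \ (F ∩ B₀)) ∪ X) = r := hfact1 (F ∩ B₀) hF₀B₀ hF₀k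
                  have e2 : (B₀ \ (F ∩ B₀)) ∪ X ⊆
                      M.closure ((B₀ \ (F ∩ B₀)) ∪ ((S \ (F ∩ S)) ∩ s '' Iio i)) :=
                    union_subset (subset_union_left.trans (M.subset_closure _ hWE2)) hXsub
                  have e3 : mrank M ((B₀ \ (F ∩ B₀)) ∪ X) ≤
                      mrank M ((B₀ \ (F ∩ B₀)) ∪ ((S \ (F ∩ S)) ∩ s '' Iio i)) := by
                    refine le_trans (MrankAPI.mrank_mono
                      (hE.subset (M.closure_subset_ground _)) e2) ?_
                    rw [MrankAPI.mrank_closure_eq hE hWE2]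
                  omega
                have hgen := hsgen i hi _ hWsub hnXW
                have hrk1 : mrank M (insert (s i)
                    ((B₀ \ (F ∩ B₀)) ∪ ((S \ (F ∩ S)) ∩ s '' Iio i))) =
                    mrank M ((B₀ \ (F ∩ B₀)) ∪ ((S \ (F ∩ S)) ∩ s '' Iio i)) + 1 :=
                  MrankAPI.mrank_insert_not_mem_closure hE hWE2 (hXE (hsX i hi)) hgen
                have heq2 : (B₀ \ (F ∩ B₀)) ∪ ((S \ (F ∩ S)) ∩ s '' Iio (i+1)) =
                    insert (s i) ((B₀ \ (F ∩ B₀)) ∪ ((S \ (F ∩ S)) ∩ s '' Iio i)) := by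
                  rw [hTset, union_insert]
                rw [heq2, hrk1, hTset, hccc]
                have hihi := ih (by omega)
                omega
            · have hTset : (S \ (F ∩ S)) ∩ s '' Iio (i+1) = (S \ (F ∩ S)) ∩ s '' Iio i := by
                rw [himg]
                ext y
                simp only [mem_inter_iff, mem_insert_iff]
                constructor
                · rintro ⟨hy, hc | hc⟩
                  · exact absurd (hc ▸ hy) hsT
                  · exact ⟨hy, hc⟩
                · rintro ⟨hy, hc⟩
                  exact ⟨hy, Or.inr hc⟩
              rw [hTset]
              exact ih (by omega)
        have hfinal := hchain m le_rfl
        have hTSm : (S \ (F ∩ S)) ∩ s '' Iio m = S \ (F ∩ S) :=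
          inter_eq_self_of_subset_left (hS ▸ hTS)
        rw [hTSm] at hfinal
        have hrle : r ≤ mrank M (B₀ \ (F ∩ B₀)) + (S \ (F ∩ S)).ncard := by omega
        calc r = min r (mrank M (B₀ \ (F ∩ B₀)) + (S \ (F ∩ S)).ncard) := (min_eq_left hrle).symm
          _ ≤ mrank M ((B₀ \ (F ∩ B₀)) ∪ (S \ (F ∩ S))) := hfinal
    rw [← hr]
    omega
  refine ⟨B', ⟨hFT, fun B'' hB'' => hB'card ▸ hBmin B'' hB''⟩, ?_, ?_⟩
  · rw [hB']
    ext x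
    simp only [mem_diff, mem_union]
    constructor
    · intro hx
      exact ⟨Or.inl ⟨hx.1, hx.2⟩, hx.2⟩
    · rintro ⟨hx | hx, hcl⟩
      · exact ⟨hx.1, hcl⟩
      · exact absurd (hXcl (hSX hx)) hcl
  · rintro x ⟨hx | hx, hcl⟩
    · exact absurd hcl hx.2
    · exact hSX hx
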